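/- Let S be a set of scaled generators for a max cone K in ℝ≥0^n and let u be a scaled extremal in K. Then u ∈ S. -/

import Mathlib

open scoped NNReal

/-- The max-algebraic span of `S`: all vectors `⨆_{x ∈ S} λ_x • x` where only
finitely many coefficients `λ_x` are nonzero (`MaxSpan ∅ = {0}`). -/
def MaxSpan {n : ℕ} (S : Set (Fin n → ℝ≥0)) : Set (Fin n → ℝ≥0) :=
  {u | ∃ (F : Finset (Fin n → ℝ≥0)) (lam : (Fin n → ℝ≥0) → ℝ≥0),
    ↑F ⊆ S ∧ u = F.sup (fun x => lam x • x)}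

/-- A max cone: a subset of `ℝ≥0ⁿ` closed under pointwise max `⊔` and under
multiplication by nonnegative scalars. -/
def MaxCone {n : ℕ} (K : Set (Fin n → ℝ≥0)) : Prop :=
  0 ∈ K ∧ (∀ x ∈ K, ∀ y ∈ K, x ⊔ y ∈ K) ∧ (∀ (c : ℝ≥0), ∀ x ∈ K, c • x ∈ K)

/-- `u` is an extremal in `K` if `u = v ⊔ w` with `v, w ∈ K` implies `u = v` or `u = w`. -/
def IsExtremal {n : ℕ} (K : Set (Fin n → ℝ≥0)) (u : Fin n → ℝ≥0) : Prop :=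
  u ∈ K ∧ ∀ v ∈ K, ∀ w ∈ K, u = v ⊔ w → u = v ∨ u = w

/-- A vector is scaled if its max norm `⨆ i, x i` equals `1`. -/
def Scaled {n : ℕ} (x : Fin n → ℝ≥0) : Prop := (⨆ i, x i) = 1

/-- The support of a vector. -/
def supp {n : ℕ} (v : Fin n → ℝ≥0) : Set (Fin n) := {j | 0 < v j}

/-- For `j ∈ supp u`, `rescale u j = (1 / u j) • u`, the `j`-scaling `u(j)`. -/
noncomputable def rescale {n : ℕ} (u : Fin n → ℝ≥0) (j : Fin n) : Fin n → ℝ≥0 :=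
  (u j)⁻¹ • u

/-- `T(j) = {u(j) : u ∈ T, j ∈ supp u}`. -/
noncomputable def setScale {n : ℕ} (T : Set (Fin n → ℝ≥0)) (j : Fin n) :
    Set (Fin n → ℝ≥0) :=
  {y | ∃ u ∈ T, j ∈ supp u ∧ y = rescale u j}

/-- `u` is minimal in `T` if `v ∈ T` and `v ≤ u` imply `v = u`. -/
def MinimalIn {n : ℕ} (T : Set (Fin n → ℝ≥0)) (u : Fin n → ℝ≥0) : Prop :=
  u ∈ T ∧ ∀ v ∈ T, v ≤ u → v = u

/-- A set is totally dependent if each of its elements is a max combination of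
the remaining ones. -/
def TotallyDependent {n : ℕ} (S : Set (Fin n → ℝ≥0)) : Prop :=
  ∀ x ∈ S, x ∈ MaxSpan (S \ {x})

/-- A set is independent if none of its elements is a max combination of
the remaining ones. -/
def IndependentSet {n : ℕ} (S : Set (Fin n → ℝ≥0)) : Prop :=
  ∀ x ∈ S, x ∉ MaxSpan (S \ {x})

/-- A basis for `K` is an independent set of generators for `K`. -/
def IsBasis {n : ℕ} (S K : Set (Fin n → ℝ≥0)) : Prop :=
  IndependentSet S ∧ MaxSpan S = K

lemma sup_mem_cone {n : ℕ} {K : Set (Fin n → ℝ≥0)} (hK : MaxCone K)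
    (F : Finset (Fin n → ℝ≥0)) (f : (Fin n → ℝ≥0) → (Fin n → ℝ≥0))
    (hf : ∀ x ∈ F, f x ∈ K) : F.sup f ∈ K := by
  classical
  induction F using Finset.induction_on with
  | empty => convert hK.1 using 1; ext; simp
  | @insert a F' hx ih =>
    rw [Finset.sup_insert]
    exact hK.2.1 _ (hf a (Finset.mem_insert_self a F')) _
      (ih fun x hx => hf x (Finset.mem_insert_of_mem hx))

lemma extremal_sup {n : ℕ} {K : Set (Fin n → ℝ≥0)} (hK : MaxCone K)
    {u : Fin n → ℝ≥0} (hu : IsExtremal K u)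
    (F : Finset (Fin n → ℝ≥0)) (f : (Fin n → ℝ≥0) → (Fin n → ℝ≥0))
    (hf : ∀ x ∈ F, f x ∈ K) (heq : u = F.sup f) :
    u = 0 ∨ ∃ x ∈ F, u = f x := by
  classical
  induction F using Finset.induction_on with
  | empty =>
    left
    rw [heq]; ext; simp
  | @insert a F' hx ih =>
    rw [Finset.sup_insert] at heq
    rcases hu.2 _ (hf a (Finset.mem_insert_self a F')) _
        (sup_mem_cone hK F' f fun x hx => hf x (Finset.mem_insert_of_mem hx)) heq with h | h
    · exact Or.inr ⟨a, Finset.mem_insert_self a F', h⟩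
    · rcases ih (fun x hx => hf x (Finset.mem_insert_of_mem hx)) h with h0 | ⟨x, hxF, hux⟩
      · exact Or.inl h0
      · exact Or.inr ⟨x, Finset.mem_insert_of_mem hxF, hux⟩

set_option synthInstance.maxHeartbeats 1000000 in
/-- if `S` is a set of scaled generators for the max cone `K` and
`u` is a scaled extremal in `K`, then `u ∈ S`. -/
theorem stmt3 {n : ℕ} (K S : Set (Fin n → ℝ≥0)) (hK : MaxCone K)
    (hgen : MaxSpan S = K) (hSsc : ∀ x ∈ S, Scaled x)
    (u : Fin n → ℝ≥0) (hu : IsExtremal K u) (husc : Scaled u) :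
    u ∈ S := by
  classical
  have hu0 : u ≠ 0 := by
    intro h
    rw [h] at husc
    have hz : (⨆ _ : Fin n, (0 : ℝ≥0)) = 0 := by simpa using (iSup_bot : (⨆ _ : Fin n, (⊥ : ℝ≥0)) = ⊥)
    have : (0:ℝ≥0) = 1 := by rw [← hz]; exact husc
    exact one_ne_zero this.symm
  have huK : u ∈ K := hu.1
  rw [← hgen] at huK
  obtain ⟨F, lam, hFS, hsup⟩ := huK
  have hSK : ∀ x ∈ S, x ∈ K := by
    intro x hx
    rw [← hgen]
    exact ⟨{x}, fun _ => 1, by simpa using hx, by simp⟩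
  have hf : ∀ x ∈ F, lam x • x ∈ K := fun x hx =>
    hK.2.2 _ _ (hSK x (hFS hx))
  rcases extremal_sup hK hu F _ hf hsup with h0 | ⟨x, hxF, hux⟩
  · exact absurd h0 hu0
  have hxS : x ∈ S := hFS hxF
  have hxsc := hSsc x hxS
  have hlam : lam x = 1 := by
    have : (⨆ i, (lam x • x) i) = lam x * ⨆ i, x i := by
      simpa [Pi.smul_apply, smul_eq_mul] using (NNReal.mul_iSup (fun i => x i) (lam x)).symm
    rw [← hux] at this
    rw [husc, hxsc, mul_one] at this
    exact this.symm
  rw [hux, hlam, one_smul]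
  exact hxS
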